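/- Let O ⊆ ℝ^m × ℝⁿ be convex, S_v ⊆ ℝ^m, A_K, S_K matrices, and λ ∈ (0,1). Suppose (v, e) ∈ O implies (v, (1/λ) A_K e) ∈ O (invariance of the scaled MAS), and suppose (v + r, -S_K r) ∈ O for all v in some subset S̄_v ⊆ S_v and all r with ‖r‖ ≤ δ. If (v_{t-1}, x_{t-1} - S_K v_{t-1}) ∈ O with v_{t-1} ∈ S̄_v, x_t = A_K x_{t-1} + B v_{t-1}, S_K = (I - A_K)⁻¹ B, r_t ∈ S̄_v, and ‖r_t - v_{t-1}‖ ≥ (1-λ)δ, then with α = (1-λ)δ/‖r_t - v_{t-1}‖ ∈ (0,1], the point v = v_{t-1} + α(r_t - v_{t-1}) satisfies (v, x_t - S_K v) ∈ O. -/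
import Mathlib


/-- Reference governor feasibility (large-step case): under the scaled-MAS
invariance and interior-margin properties of the convex set `O`, if
`(v_{t-1}, x_{t-1} - S_K v_{t-1}) ∈ O`, `x_t = A_K x_{t-1} + B v_{t-1}`,
`(I - A_K) S_K = B`, `r_t ∈ S̄_v` and `‖r_t - v_{t-1}‖ ≥ (1-λ)δ`, then with
`α = (1-λ)δ/‖r_t - v_{t-1}‖ ∈ (0,1]` the reference
`v = v_{t-1} + α (r_t - v_{t-1})` satisfies `(v, x_t - S_K v) ∈ O`. -/
theorem stmt10 {n m : ℕ}
    (AK : EuclideanSpace ℝ (Fin n) →L[ℝ] EuclideanSpace ℝ (Fin n))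
    (B SK : EuclideanSpace ℝ (Fin m) →L[ℝ] EuclideanSpace ℝ (Fin n))
    (hSK : ∀ w : EuclideanSpace ℝ (Fin m), SK w - AK (SK w) = B w)
    (O : Set ((EuclideanSpace ℝ (Fin m)) × (EuclideanSpace ℝ (Fin n))))
    (hO : Convex ℝ O)
    (lam δ : ℝ) (hlam : lam ∈ Set.Ioo (0 : ℝ) 1) (hδ : 0 < δ)
    (Sv Sbar : Set (EuclideanSpace ℝ (Fin m))) (hSbar : Sbar ⊆ Sv)
    (hinv : ∀ v e, (v, e) ∈ O → (v, (1 / lam) • AK e) ∈ O)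
    (hmargin : ∀ v ∈ Sbar, ∀ rδ : EuclideanSpace ℝ (Fin m),
      ‖rδ‖ ≤ δ → (v + rδ, -(SK rδ)) ∈ O)
    (vprev : EuclideanSpace ℝ (Fin m)) (hvprev : vprev ∈ Sbar)
    (xprev xt : EuclideanSpace ℝ (Fin n))
    (hmem : (vprev, xprev - SK vprev) ∈ O)
    (hxt : xt = AK xprev + B vprev)
    (rt : EuclideanSpace ℝ (Fin m)) (hrt : rt ∈ Sbar)
    (hbig : (1 - lam) * δ ≤ ‖rt - vprev‖) :
    (1 - lam) * δ / ‖rt - vprev‖ ∈ Set.Ioc (0 : ℝ) 1 ∧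
      ((vprev + ((1 - lam) * δ / ‖rt - vprev‖) • (rt - vprev)),
        xt - SK (vprev + ((1 - lam) * δ / ‖rt - vprev‖) • (rt - vprev))) ∈ O := by
  obtain ⟨hl0, hl1⟩ := hlam
  have hpos : (0:ℝ) < (1 - lam) * δ := mul_pos (by linarith) hδ
  have hnpos : (0:ℝ) < ‖rt - vprev‖ := lt_of_lt_of_le hpos hbig
  have hne : ‖rt - vprev‖ ≠ 0 := ne_of_gt hnpos
  set α := (1 - lam) * δ / ‖rt - vprev‖ with hα
  have hα0 : 0 < α := div_pos hpos hnpos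
  have hα1 : α ≤ 1 := (div_le_one hnpos).mpr hbig
  refine ⟨⟨hα0, hα1⟩, ?_⟩
  -- the unit-scaled perturbation
  set rδ := (δ / ‖rt - vprev‖) • (rt - vprev) with hrδ
  have hrδnorm : ‖rδ‖ ≤ δ := by
    rw [hrδ, norm_smul, Real.norm_eq_abs, abs_of_nonneg (by positivity)]
    rw [div_mul_cancel₀ _ hne]
  have h2 : (vprev + rδ, -(SK rδ)) ∈ O := hmargin vprev hvprev rδ hrδnorm
  have h1 : (vprev, (1 / lam) • AK (xprev - SK vprev)) ∈ O :=
    hinv _ _ hmem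
  have hconv := hO h1 h2 (le_of_lt hl0) (by linarith : (0:ℝ) ≤ 1 - lam) (by ring)
  have hαrδ : α • (rt - vprev) = (1 - lam) • rδ := by
    rw [hrδ, smul_smul, hα]
    congr 1
    field_simp
  have e1 : vprev + α • (rt - vprev) = lam • vprev + (1 - lam) • (vprev + rδ) := by
    rw [hαrδ, smul_add]; module
  have e2 : xt - SK (vprev + α • (rt - vprev)) =
      lam • ((1 / lam) • AK (xprev - SK vprev)) + (1 - lam) • (-(SK rδ)) := by
    rw [smul_smul, mul_one_div_cancel (ne_of_gt hl0), one_smul, hαrδ, hxt,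
      map_add, map_smul, map_sub, ← hSK vprev]
    module
  have : (vprev + α • (rt - vprev), xt - SK (vprev + α • (rt - vprev)))
      = lam • (vprev, (1 / lam) • AK (xprev - SK vprev)) + (1 - lam) • (vprev + rδ, -(SK rδ)) := by
    rw [Prod.smul_mk, Prod.smul_mk, Prod.mk_add_mk]
    exact Prod.ext e1 e2
  rw [this]
  exact hconv
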